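/- Let q ≥ 2, r > 0, and u : ℝ² → ℂ measurable with finite integrals below. Then ∫ |u|^{q+1} dx ≤ (π r²)^{1/(q+2)} (∫ |u|^{q+2} dx)^{(q+1)/(q+2)} + r^{-1} (∫ |x|² |u|^q dx)^{1/2} (∫ |u|^{q+2} dx)^{1/2}. -/

import Mathlib

open MeasureTheory

lemma memLp_of_integrable_rpow {α : Type*} [MeasurableSpace α] {μ : Measure α} {f : α → ℝ}
    (hm : AEStronglyMeasurable f μ) (hnn : ∀ x, 0 ≤ f x) {s : ℝ} (hs : 0 < s)
    (hint : Integrable (fun x => f x ^ s) μ) : MemLp f (ENNReal.ofReal s) μ := by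
  have h0 : ENNReal.ofReal s ≠ 0 := by
    simp [ENNReal.ofReal_eq_zero, not_le, hs]
  refine (memLp_norm_rpow_iff (p := ENNReal.ofReal s) hm h0 ENNReal.ofReal_ne_top).mp ?_
  rw [ENNReal.div_self h0 ENNReal.ofReal_ne_top, memLp_one_iff_integrable]
  have : (fun x => ‖f x‖ ^ (ENNReal.ofReal s).toReal) = fun x => f x ^ s := by
    funext x
    rw [ENNReal.toReal_ofReal hs.le, Real.norm_of_nonneg (hnn x)]
  rw [this]
  exact hint

theorem stmt_1 (q r : ℝ) (hq : 2 ≤ q) (hr : 0 < r)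
    (u : EuclideanSpace ℝ (Fin 2) → ℂ) (hmeas : Measurable u)
    (h1 : Integrable (fun x : EuclideanSpace ℝ (Fin 2) => ‖u x‖ ^ (q + 1)))
    (h2 : Integrable (fun x : EuclideanSpace ℝ (Fin 2) => ‖u x‖ ^ (q + 2)))
    (h3 : Integrable (fun x : EuclideanSpace ℝ (Fin 2) => ‖x‖ ^ 2 * ‖u x‖ ^ q)) :
    (∫ x : EuclideanSpace ℝ (Fin 2), ‖u x‖ ^ (q + 1)) ≤
      (Real.pi * r ^ 2) ^ (1 / (q + 2)) *
          (∫ x : EuclideanSpace ℝ (Fin 2), ‖u x‖ ^ (q + 2)) ^ ((q + 1) / (q + 2)) +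
        r⁻¹ * (∫ x : EuclideanSpace ℝ (Fin 2), ‖x‖ ^ 2 * ‖u x‖ ^ q) ^ ((1 : ℝ) / 2) *
          (∫ x : EuclideanSpace ℝ (Fin 2), ‖u x‖ ^ (q + 2)) ^ ((1 : ℝ) / 2) := by
  have hq0 : (0 : ℝ) < q := by linarith
  have hq1 : (0 : ℝ) < q + 1 := by linarith
  have hq2 : (0 : ℝ) < q + 2 := by linarith
  set s : Set (EuclideanSpace ℝ (Fin 2)) := Metric.ball (0 : EuclideanSpace ℝ (Fin 2)) r with hs_def
  have hs_meas : MeasurableSet s := measurableSet_ball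
  -- measurability facts
  have hum : Measurable fun x : EuclideanSpace ℝ (Fin 2) => ‖u x‖ := hmeas.norm
  have hrpow : ∀ {c : ℝ}, 0 ≤ c → Measurable fun x : EuclideanSpace ℝ (Fin 2) => ‖u x‖ ^ c :=
    fun hc => (Real.continuous_rpow_const hc).measurable.comp hum
  have hm1 : Measurable fun x : EuclideanSpace ℝ (Fin 2) => ‖u x‖ ^ (q + 1) := hrpow (by linarith)
  -- splitting identity for exponents
  have hsplit : ∀ y : ℝ, 0 ≤ y → y ^ (q + 1) = y ^ (q / 2) * y ^ ((q + 2) / 2) := by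
    intro y hy
    rw [show q + 1 = q / 2 + (q + 2) / 2 by ring, Real.rpow_add' hy (by linarith)]
  have hsq1 : ∀ y : ℝ, 0 ≤ y → y ^ (q / 2) * y ^ (q / 2) = y ^ q := by
    intro y hy
    rw [← Real.rpow_add' hy (by linarith)]
    norm_num
  have hsq2 : ∀ y : ℝ, 0 ≤ y → y ^ ((q + 2) / 2) * y ^ ((q + 2) / 2) = y ^ (q + 2) := by
    intro y hy
    rw [← Real.rpow_add' hy (by linarith)]
    norm_num
  -- nonnegativity of integrals
  have hA : 0 ≤ ∫ x : EuclideanSpace ℝ (Fin 2), ‖u x‖ ^ (q + 2) :=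
    integral_nonneg fun x => Real.rpow_nonneg (norm_nonneg _) _
  have hB : 0 ≤ ∫ x : EuclideanSpace ℝ (Fin 2), ‖x‖ ^ 2 * ‖u x‖ ^ q :=
    integral_nonneg fun x => mul_nonneg (by positivity) (Real.rpow_nonneg (norm_nonneg _) _)
  -- volume of the ball
  have hvol : (volume s).toReal = Real.pi * r ^ 2 := by
    rw [hs_def, EuclideanSpace.volume_ball]
    simp only [Fintype.card_fin]
    rw [Real.sq_sqrt Real.pi_nonneg,
      show ((2 : ℕ) : ℝ) / 2 + 1 = 2 by norm_num, Real.Gamma_two]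
    rw [← ENNReal.ofReal_pow hr.le, ← ENNReal.ofReal_mul (by positivity)]
    rw [ENNReal.toReal_ofReal (by positivity)]
    ring
  ------------------------------------------------------------------
  -- Part 1 : inner region
  ------------------------------------------------------------------
  have part1 : (∫ x in s, ‖u x‖ ^ (q + 1)) ≤
      (Real.pi * r ^ 2) ^ (1 / (q + 2)) *
        (∫ x : EuclideanSpace ℝ (Fin 2), ‖u x‖ ^ (q + 2)) ^ ((q + 1) / (q + 2)) := by
    haveI : IsFiniteMeasure (volume.restrict s) :=
      ⟨by rw [Measure.restrict_apply_univ]; exact measure_ball_lt_top⟩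
    have hpq : Real.HolderConjugate ((q + 2) / (q + 1)) (q + 2) := by
      rw [Real.holderConjugate_iff]
      constructor
      · rw [lt_div_iff₀ hq1]; linarith
      · rw [inv_div]
        field_simp
        ring
    have hfs : (fun x : EuclideanSpace ℝ (Fin 2) => (‖u x‖ ^ (q + 1)) ^ ((q + 2) / (q + 1))) =
        fun x : EuclideanSpace ℝ (Fin 2) => ‖u x‖ ^ (q + 2) := by
      funext x
      rw [← Real.rpow_mul (norm_nonneg _)]
      congr 1
      field_simp
    have hf : MemLp (fun x : EuclideanSpace ℝ (Fin 2) => ‖u x‖ ^ (q + 1)) (ENNReal.ofReal ((q + 2) / (q + 1)))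
        (volume.restrict s) := by
      apply memLp_of_integrable_rpow hm1.aestronglyMeasurable
        (fun x => Real.rpow_nonneg (norm_nonneg _) _) (by positivity)
      rw [hfs]
      exact h2.restrict
    have hg : MemLp (fun _ : EuclideanSpace ℝ (Fin 2) => (1 : ℝ)) (ENNReal.ofReal (q + 2)) (volume.restrict s) :=
      memLp_const 1
    have H := integral_mul_le_Lp_mul_Lq_of_nonneg hpq
      (ae_of_all _ fun x => Real.rpow_nonneg (norm_nonneg _) _)
      (ae_of_all _ fun _ => zero_le_one) hf hg
    simp only [mul_one, Real.one_rpow] at H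
    rw [hfs] at H
    rw [integral_const, measureReal_restrict_apply_univ, measureReal_def, smul_eq_mul, mul_one, hvol] at H
    have h1div : 1 / ((q + 2) / (q + 1)) = (q + 1) / (q + 2) := one_div_div _ _
    rw [h1div] at H
    refine H.trans ?_
    rw [mul_comm]
    exact mul_le_mul_of_nonneg_left (Real.rpow_le_rpow
      (setIntegral_nonneg hs_meas fun x _ => Real.rpow_nonneg (norm_nonneg _) _)
      (setIntegral_le_integral h2
        (ae_of_all _ fun x => Real.rpow_nonneg (norm_nonneg _) _)) (by positivity)) (by positivity)
  ------------------------------------------------------------------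
  -- Part 2 : outer region
  ------------------------------------------------------------------
  -- the key product function
  set X : EuclideanSpace ℝ (Fin 2) → ℝ := fun x => ‖x‖ * ‖u x‖ ^ (q + 1) with hX_def
  have hXnn : ∀ x, 0 ≤ X x := fun x =>
    mul_nonneg (norm_nonneg _) (Real.rpow_nonneg (norm_nonneg _) _)
  have hXmeas : Measurable X := measurable_norm.mul hm1
  -- pointwise AM-GM bound giving integrability of X
  have hXle : ∀ x : EuclideanSpace ℝ (Fin 2), X x ≤ (‖x‖ ^ 2 * ‖u x‖ ^ q + ‖u x‖ ^ (q + 2)) / 2 := by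
    intro x
    have ha := hsq1 ‖u x‖ (norm_nonneg _)
    have hb := hsq2 ‖u x‖ (norm_nonneg _)
    have hc := hsplit ‖u x‖ (norm_nonneg _)
    have h2' : (0:ℝ) ≤ ‖u x‖ ^ (q / 2) := Real.rpow_nonneg (norm_nonneg _) _
    have h3' : (0:ℝ) ≤ ‖u x‖ ^ ((q + 2) / 2) := Real.rpow_nonneg (norm_nonneg _) _
    have key := sq_nonneg (‖x‖ * ‖u x‖ ^ (q / 2) - ‖u x‖ ^ ((q + 2) / 2))
    simp only [hX_def]
    nlinarith [norm_nonneg x]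
  have hXint : Integrable X := by
    refine Integrable.mono' ((h3.add h2).div_const 2) hXmeas.aestronglyMeasurable
      (ae_of_all _ fun x => ?_)
    rw [Real.norm_of_nonneg (hXnn x)]
    exact hXle x
  -- Cauchy–Schwarz on the whole space
  have hCS : (∫ x : EuclideanSpace ℝ (Fin 2), X x) ≤
      (∫ x : EuclideanSpace ℝ (Fin 2), ‖x‖ ^ 2 * ‖u x‖ ^ q) ^ ((1:ℝ) / 2) *
        (∫ x : EuclideanSpace ℝ (Fin 2), ‖u x‖ ^ (q + 2)) ^ ((1:ℝ) / 2) := by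
    have hpq : Real.HolderConjugate 2 2 := Real.holderConjugate_iff.mpr ⟨one_lt_two, by norm_num⟩
    set f : EuclideanSpace ℝ (Fin 2) → ℝ := fun x => ‖x‖ * ‖u x‖ ^ (q / 2) with hf_def
    set g : EuclideanSpace ℝ (Fin 2) → ℝ := fun x => ‖u x‖ ^ ((q + 2) / 2) with hg_def
    have hfnn : ∀ x, 0 ≤ f x := fun x =>
      mul_nonneg (norm_nonneg _) (Real.rpow_nonneg (norm_nonneg _) _)
    have hgnn : ∀ x, 0 ≤ g x := fun x => Real.rpow_nonneg (norm_nonneg _) _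
    have hfm : Measurable f := measurable_norm.mul (hrpow (by positivity))
    have hgm : Measurable g := hrpow (by positivity)
    have hf2 : (fun x => f x ^ (2:ℝ)) = fun x : EuclideanSpace ℝ (Fin 2) => ‖x‖ ^ 2 * ‖u x‖ ^ q := by
      funext x
      rw [Real.rpow_two, hf_def]
      simp only []
      rw [mul_pow]
      congr 1
      rw [sq, hsq1 ‖u x‖ (norm_nonneg _)]
    have hg2 : (fun x => g x ^ (2:ℝ)) = fun x : EuclideanSpace ℝ (Fin 2) => ‖u x‖ ^ (q + 2) := by
      funext x
      rw [Real.rpow_two, hg_def]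
      simp only []
      rw [sq, hsq2 ‖u x‖ (norm_nonneg _)]
    have hfmem : MemLp f (ENNReal.ofReal 2) volume := by
      apply memLp_of_integrable_rpow hfm.aestronglyMeasurable hfnn (by norm_num)
      rw [hf2]; exact h3
    have hgmem : MemLp g (ENNReal.ofReal 2) volume := by
      apply memLp_of_integrable_rpow hgm.aestronglyMeasurable hgnn (by norm_num)
      rw [hg2]; exact h2
    have H := integral_mul_le_Lp_mul_Lq_of_nonneg hpq (ae_of_all _ hfnn) (ae_of_all _ hgnn)
      hfmem hgmem
    rw [hf2, hg2] at H
    have hfg : (fun x => f x * g x) = X := by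
      funext x
      simp only [hf_def, hg_def, hX_def]
      rw [mul_assoc, ← hsplit ‖u x‖ (norm_nonneg _)]
    calc (∫ x : EuclideanSpace ℝ (Fin 2), X x) = ∫ x : EuclideanSpace ℝ (Fin 2), f x * g x := by rw [hfg]
      _ ≤ _ := H
  have part2 : (∫ x in sᶜ, ‖u x‖ ^ (q + 1)) ≤
      r⁻¹ * (∫ x : EuclideanSpace ℝ (Fin 2), ‖x‖ ^ 2 * ‖u x‖ ^ q) ^ ((1:ℝ) / 2) *
        (∫ x : EuclideanSpace ℝ (Fin 2), ‖u x‖ ^ (q + 2)) ^ ((1:ℝ) / 2) := by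
    have hpt : ∀ x ∈ sᶜ, ‖u x‖ ^ (q + 1) ≤ r⁻¹ * X x := by
      intro x hx
      have hxr : r ≤ ‖x‖ := by
        simpa [hs_def, Metric.mem_ball, dist_zero_right, not_lt] using hx
      have h0 : 0 ≤ ‖u x‖ ^ (q + 1) := Real.rpow_nonneg (norm_nonneg _) _
      have : ‖u x‖ ^ (q + 1) = r⁻¹ * (r * ‖u x‖ ^ (q + 1)) := by
        field_simp
      rw [this]
      simp only [hX_def]
      gcongr
    calc (∫ x in sᶜ, ‖u x‖ ^ (q + 1))
        ≤ ∫ x in sᶜ, r⁻¹ * X x := by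
          refine setIntegral_mono_on h1.integrableOn
            ((hXint.const_mul r⁻¹).integrableOn) hs_meas.compl hpt
      _ = r⁻¹ * ∫ x in sᶜ, X x := by rw [integral_const_mul]
      _ ≤ r⁻¹ * ∫ x : EuclideanSpace ℝ (Fin 2), X x := by
          exact mul_le_mul_of_nonneg_left (setIntegral_le_integral hXint (ae_of_all _ hXnn)) (by positivity)
      _ ≤ r⁻¹ * ((∫ x : EuclideanSpace ℝ (Fin 2), ‖x‖ ^ 2 * ‖u x‖ ^ q) ^ ((1:ℝ) / 2) *
            (∫ x : EuclideanSpace ℝ (Fin 2), ‖u x‖ ^ (q + 2)) ^ ((1:ℝ) / 2)) := by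
          gcongr
      _ = _ := by ring
  ------------------------------------------------------------------
  -- combine
  ------------------------------------------------------------------
  calc (∫ x : EuclideanSpace ℝ (Fin 2), ‖u x‖ ^ (q + 1))
      = (∫ x in s, ‖u x‖ ^ (q + 1)) + ∫ x in sᶜ, ‖u x‖ ^ (q + 1) :=
        (integral_add_compl hs_meas h1).symm
    _ ≤ _ := add_le_add part1 part2
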